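/- Fix C₇, C₈, C₉ > 0, ε ∈ (0,1], s ∈ (0,1/2], a > 1, b > 1+s, and let g : [0,∞) → [0,∞) be C¹ and satisfy g'(t) + C₇ ε g(t)^{1+1/s} ≤ C₉ ε² (1+t)^{−b} for all t ≥ 0, with g(0) ≤ ε². Let β = 1 + 2/s. Then there exists C > 0 depending only on C₇, C₉, s, b (not on ε) such that g(t) ≤ C ε² (1 + ε^β t)^{−s} for all t ≥ 0. -/

import Mathlib

set_option maxHeartbeats 1000000

/-- First-crossing lemma: if `h T ≤ 0` and `h' t < 0` whenever `t ≥ T` and `h t ≥ 0`,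
then `h ≤ 0` on `[T, ∞)`. -/
lemma stmt18_cross {T : ℝ} {h h' : ℝ → ℝ}
    (hderiv : ∀ t, T ≤ t → HasDerivAt h (h' t) t)
    (hT : h T ≤ 0)
    (hkey : ∀ t, T ≤ t → 0 ≤ h t → h' t < 0) :
    ∀ t, T ≤ t → h t ≤ 0 := by
  intro t₁ ht₁
  by_contra hpos
  push_neg at hpos
  have hTt : T < t₁ := by
    rcases eq_or_lt_of_le ht₁ with rfl | h; · linarith
    · exact h
  set A : Set ℝ := Set.Icc T t₁ ∩ h ⁻¹' Set.Iic 0 with hA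
  have hcont : ContinuousOn h (Set.Icc T t₁) := fun x hx =>
    (hderiv x hx.1).continuousAt.continuousWithinAt
  have hAclosed : IsClosed A :=
    hcont.preimage_isClosed_of_isClosed isClosed_Icc isClosed_Iic
  have hAne : A.Nonempty := ⟨T, ⟨le_refl _, le_of_lt hTt⟩, hT⟩
  have hAbdd : BddAbove A := ⟨t₁, fun x hx => hx.1.2⟩
  set u := sSup A with hu
  have huA : u ∈ A := hAclosed.csSup_mem hAne hAbdd
  have hTu : T ≤ u := huA.1.1
  have hut : u ≤ t₁ := huA.1.2
  have huneg : h u ≤ 0 := huA.2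
  have hult : u < t₁ := lt_of_le_of_ne hut (fun he => by rw [he] at huneg; linarith)
  have hIoc : ∀ t ∈ Set.Ioc u t₁, 0 < h t := by
    intro t ht
    by_contra hc
    push_neg at hc
    have : t ∈ A := ⟨⟨le_trans hTu ht.1.le, ht.2⟩, hc⟩
    have := le_csSup hAbdd this
    linarith [ht.1]
  obtain ⟨c, hc, hcs⟩ := exists_hasDerivAt_eq_slope h h' hult
    (fun x hx => (hderiv x (le_trans hTu hx.1)).continuousAt.continuousWithinAt)
    (fun x hx => hderiv x (le_trans hTu hx.1.le))
  have hslope : 0 < (h t₁ - h u) / (t₁ - u) :=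
    div_pos (by linarith) (by linarith [hc.2])
  have hcpos : 0 < h c := hIoc c ⟨hc.1, hc.2.le⟩
  have := hkey c (le_trans hTu hc.1.le) hcpos.le
  rw [hcs] at this
  linarith

/-- Grönwall-type decay lemma: if `g ≥ 0` is `C¹` on `[0,∞)` with
`g' + C₇ ε g^{1+1/s} ≤ C₉ ε²(1+t)^{−b}` and `g(0) ≤ ε²`, where `s ∈ (0,1/2]`, `a > 1`,
`b > 1+s`, then `g(t) ≤ C ε²(1+ε^β t)^{−s}` with `β = 1+2/s` and `C` depending only on
`C₇, C₉, s, b` (in particular not on `ε ∈ (0,1]`). -/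
theorem stmt18 (C₇ C₈ C₉ : ℝ) (hC₇ : 0 < C₇) (hC₈ : 0 < C₈) (hC₉ : 0 < C₉)
    (s a b : ℝ) (hs : 0 < s) (hs' : s ≤ 1 / 2) (ha : 1 < a) (hb : 1 + s < b) :
    ∃ C : ℝ, 0 < C ∧
      ∀ (ε : ℝ) (g g' : ℝ → ℝ),
        0 < ε → ε ≤ 1 →
        (∀ t, 0 ≤ t → 0 ≤ g t) →
        (∀ t, 0 ≤ t → HasDerivAt g (g' t) t) →
        (∀ t, 0 ≤ t → g' t + C₇ * ε * g t ^ (1 + 1 / s) ≤ C₉ * ε ^ 2 * (1 + t) ^ (-b)) →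
        g 0 ≤ ε ^ 2 →
        ∀ t, 0 ≤ t → g t ≤ C * ε ^ 2 * (1 + ε ^ (1 + 2 / s) * t) ^ (-s) := by
  have hb1 : 0 < b - 1 := by linarith
  set M : ℝ := 1 + C₉ / (b - 1) with hM
  have hM0 : 0 < M := by positivity
  set R : ℝ := (s + 2 ^ (s + 1) * C₉ + 1) / C₇ with hR
  have hR0 : 0 < R := by positivity
  set K : ℝ := max (2 ^ s * M) (max 1 (R ^ s)) with hK
  have hK1 : (1 : ℝ) ≤ K := le_trans (le_max_left _ _) (le_max_right _ _)
  have hK0 : 0 < K := lt_of_lt_of_le one_pos hK1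
  -- the key constant inequality : C₇ K^{1+1/s} - s K ≥ 2^{s+1} C₉ + 1
  have hKkey : s * K + 2 ^ (s + 1) * C₉ + 1 ≤ C₇ * K ^ (1 + 1 / s) := by
    have hKR : R ^ s ≤ K := le_trans (le_max_right _ _) (le_max_right _ _)
    have h1 : R ≤ K ^ (1 / s) := by
      have := Real.rpow_le_rpow (by positivity) hKR (by positivity : (0:ℝ) ≤ 1 / s)
      rwa [← Real.rpow_mul hR0.le, mul_one_div_cancel hs.ne', Real.rpow_one] at this
    have h2 : K ^ (1 + 1 / s) = K * K ^ (1 / s) := by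
      rw [Real.rpow_add hK0, Real.rpow_one]
    rw [h2]
    have h3 : C₇ * R ≤ C₇ * K ^ (1 / s) := by nlinarith
    have h4 : C₇ * R = s + 2 ^ (s + 1) * C₉ + 1 := by
      rw [hR]; field_simp
    calc s * K + 2 ^ (s + 1) * C₉ + 1
        ≤ (s + 2 ^ (s + 1) * C₉ + 1) * K := by
          have hX : (0:ℝ) ≤ 2 ^ (s + 1) * C₉ := by positivity
          nlinarith [mul_nonneg hX (by linarith : (0:ℝ) ≤ K - 1)]
      _ = (C₇ * R) * K := by rw [h4]
      _ ≤ (C₇ * K ^ (1 / s)) * K := by nlinarith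
      _ = C₇ * (K * K ^ (1 / s)) := by ring
  refine ⟨K, hK0, ?_⟩
  intro ε g g' hε hε1 hgnn hg hineq hg0
  set E : ℝ := ε ^ (1 + 2 / s) with hE
  have hE0 : 0 < E := Real.rpow_pos_of_pos hε _
  have hE1 : E ≤ 1 := Real.rpow_le_one hε.le hε1 (by positivity)
  -- Step 1: global bound g t ≤ M ε²
  have hMb : ∀ t, 0 ≤ t → g t ≤ M * ε ^ 2 := by
    set c : ℝ := C₉ * ε ^ 2 / (b - 1) with hc
    have hc0 : 0 < c := by positivity
    set F : ℝ → ℝ := fun t => g t + c * (1 + t) ^ (1 - b) with hF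
    have hFd : ∀ t, 0 ≤ t → HasDerivAt F (g' t + c * ((1 - b) * (1 + t) ^ (-b))) t := by
      intro t ht
      have h1t : (0:ℝ) < 1 + t := by linarith
      have hinner : HasDerivAt (fun x : ℝ => 1 + x) 1 t := (hasDerivAt_id t).const_add 1
      have houter : HasDerivAt (fun x : ℝ => x ^ (1 - b)) ((1 - b) * (1 + t) ^ (1 - b - 1)) (1 + t) :=
        Real.hasDerivAt_rpow_const (Or.inl h1t.ne')
      have hcomp := (houter.comp t hinner)
      have : HasDerivAt (fun x : ℝ => (1 + x) ^ (1 - b)) ((1 - b) * (1 + t) ^ (-b)) t := by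
        have e : 1 - b - 1 = -b := by ring
        rw [e, mul_one] at hcomp; exact hcomp
      exact (hg t ht).add (this.const_mul c)
    have hanti : AntitoneOn F (Set.Ici 0) := by
      apply antitoneOn_of_deriv_nonpos (convex_Ici 0)
      · exact fun x hx => (hFd x hx).continuousAt.continuousWithinAt
      · intro x hx
        rw [interior_Ici] at hx
        exact (hFd x (le_of_lt hx)).differentiableAt.differentiableWithinAt
      · intro x hx
        rw [interior_Ici] at hx
        have hx0 : (0:ℝ) ≤ x := le_of_lt hx
        rw [(hFd x hx0).deriv]
        have h1 := hineq x hx0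
        have h2 : 0 ≤ C₇ * ε * g x ^ (1 + 1 / s) :=
          mul_nonneg (by positivity) (Real.rpow_nonneg (hgnn x hx0) _)
        have h3 : c * (1 - b) * (1 + x) ^ (-b) = -(C₉ * ε ^ 2 * (1 + x) ^ (-b)) := by
          rw [hc, div_mul_eq_mul_div, div_mul_eq_mul_div, div_eq_iff hb1.ne']
          ring
        nlinarith [h3]
    have hFbound : ∀ t, 0 ≤ t → F t ≤ F 0 :=
      fun t ht => hanti (Set.self_mem_Ici) ht ht
    intro t ht
    have h1 : g t ≤ F t := by
      have : 0 ≤ c * (1 + t) ^ (1 - b) :=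
        mul_nonneg hc0.le (Real.rpow_nonneg (by linarith) _)
      simp only [hF]; linarith
    have h2 : F 0 = g 0 + c := by
      simp [hF, Real.one_rpow]
    have h3 : F 0 ≤ M * ε ^ 2 := by
      rw [h2, hM, hc]
      have : C₉ * ε ^ 2 / (b - 1) = (C₉ / (b - 1)) * ε ^ 2 := by ring
      rw [this]; nlinarith
    linarith [hFbound t ht]
  -- Step 2: comparison on [1/E, ∞)
  intro t ht
  set p : ℝ := 1 + 1 / s with hp
  set φ : ℝ → ℝ := fun t => K * ε ^ 2 * (1 + E * t) ^ (-s) with hφ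
  set φ' : ℝ → ℝ := fun t => K * ε ^ 2 * (-s * (1 + E * t) ^ (-s - 1) * E) with hφ'
  have hφd : ∀ t, 0 ≤ t → HasDerivAt φ (φ' t) t := by
    intro t ht
    have h1t : (0:ℝ) < 1 + E * t := by nlinarith
    have hinner : HasDerivAt (fun x : ℝ => 1 + E * x) E t := by
      simpa using ((hasDerivAt_id t).const_mul E).const_add 1
    have houter : HasDerivAt (fun x : ℝ => x ^ (-s)) (-s * (1 + E * t) ^ (-s - 1)) (1 + E * t) :=
      Real.hasDerivAt_rpow_const (Or.inl h1t.ne')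
    have hcomp := houter.comp t hinner
    exact (hcomp.const_mul (K * ε ^ 2))
  -- φ ≥ φ ≥ 0
  have hφnn : ∀ t, 0 ≤ t → 0 ≤ φ t := by
    intro t ht
    have : (0:ℝ) ≤ 1 + E * t := by nlinarith
    exact mul_nonneg (by positivity) (Real.rpow_nonneg this _)
  -- the value ε * (ε^2)^p = ε^2 * E
  have hεpow : ε * (ε ^ 2) ^ p = ε ^ 2 * E := by
    have h2 : (ε ^ 2 : ℝ) = ε ^ (2:ℝ) := by
      rw [← Real.rpow_natCast ε 2]; norm_num
    rw [h2, hE]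
    calc ε * (ε ^ (2:ℝ)) ^ p = ε ^ (1:ℝ) * ε ^ (2 * p) := by
          rw [Real.rpow_one, ← Real.rpow_mul hε.le]
      _ = ε ^ (1 + 2 * p) := (Real.rpow_add hε _ _).symm
      _ = ε ^ ((2:ℝ) + (1 + 2 / s)) := by
          congr 1
          rw [hp]
          ring
      _ = ε ^ (2:ℝ) * ε ^ (1 + 2 / s) := Real.rpow_add hε _ _
  -- core decay comparison for t ≥ 1/E
  have hcore : ∀ t, 1 / E ≤ t → (1 + t) ^ (-b) ≤ 2 ^ (s + 1) * E * (1 + E * t) ^ (-s - 1) := by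
    intro t htE
    have ht0 : 0 < t := lt_of_lt_of_le (by positivity) htE
    have h1t : (1:ℝ) ≤ 1 + t := by linarith
    have hEt : (1:ℝ) ≤ E * t := by
      rw [div_le_iff₀ hE0] at htE; nlinarith
    have hA0 : (0:ℝ) < 1 + E * t := by linarith
    have hA2 : 1 + E * t ≤ 2 * E * (1 + t) := by nlinarith
    have step1 : (1 + t) ^ (-b) ≤ (1 + t) ^ (-s - 1) :=
      Real.rpow_le_rpow_of_exponent_le h1t (by linarith)
    have step2 : (1 + E * t) ^ (s + 1) ≤ 2 ^ (s + 1) * E * (1 + t) ^ (s + 1) := by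
      have e1 : (1 + E * t) ^ (s + 1) ≤ (2 * E * (1 + t)) ^ (s + 1) :=
        Real.rpow_le_rpow hA0.le hA2 (by linarith)
      have e2 : (2 * E * (1 + t) : ℝ) ^ (s + 1) = 2 ^ (s+1) * E ^ (s+1) * (1 + t) ^ (s+1) := by
        rw [Real.mul_rpow (by positivity) (by linarith), Real.mul_rpow (by norm_num) hE0.le]
      have e3 : E ^ (s + 1) ≤ E := by
        have := Real.rpow_le_rpow_of_exponent_ge hE0 hE1 (by linarith : (1:ℝ) ≤ s + 1)
        rwa [Real.rpow_one] at this
      have e4 : (0:ℝ) ≤ (1+t) ^ (s+1) := Real.rpow_nonneg (by linarith) _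
      have e5 : (0:ℝ) < (2:ℝ) ^ (s+1) := Real.rpow_pos_of_pos (by norm_num) _
      calc (1 + E * t) ^ (s + 1) ≤ (2 * E * (1 + t)) ^ (s + 1) := e1
        _ = 2 ^ (s+1) * E ^ (s+1) * (1 + t) ^ (s+1) := e2
        _ ≤ 2 ^ (s+1) * E * (1 + t) ^ (s+1) :=
            mul_le_mul_of_nonneg_right (mul_le_mul_of_nonneg_left e3 e5.le) e4
    -- convert step2 divide form
    have hneg : ∀ x : ℝ, 0 ≤ x → x ^ (-s - 1) = (x ^ (s + 1))⁻¹ := by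
      intro x hx
      rw [show -s - 1 = -(s + 1) by ring, Real.rpow_neg hx]
    have ha : (0:ℝ) < (1 + t) ^ (s + 1) := Real.rpow_pos_of_pos (by linarith) _
    have hb' : (0:ℝ) < (1 + E * t) ^ (s + 1) := Real.rpow_pos_of_pos hA0 _
    have step3 : (1 + t) ^ (-s - 1) ≤ 2 ^ (s + 1) * E * (1 + E * t) ^ (-s - 1) := by
      rw [hneg _ (by linarith), hneg _ hA0.le, ← div_eq_mul_inv, inv_eq_one_div,
        div_le_div_iff₀ ha hb']
      nlinarith [step2]
    linarith
  -- comparison: g ≤ φ on [1/E, ∞)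
  have hcomp : ∀ t, 1 / E ≤ t → g t ≤ φ t := by
    have hTnn : (0:ℝ) ≤ 1 / E := by positivity
    have hhd : ∀ t, 1 / E ≤ t → HasDerivAt (fun t => g t - φ t) (g' t - φ' t) t :=
      fun t ht => (hg t (le_trans hTnn ht)).sub (hφd t (le_trans hTnn ht))
    have hhT : g (1 / E) - φ (1 / E) ≤ 0 := by
      have h1 : E * (1 / E) = 1 := mul_one_div_cancel hE0.ne'
      have h2 : φ (1 / E) = K * ε ^ 2 * 2 ^ (-s) := by
        simp only [hφ, h1]; norm_num
      have h3 : g (1 / E) ≤ M * ε ^ 2 := hMb _ hTnn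
      have h4 : M * ε ^ 2 ≤ K * ε ^ 2 * 2 ^ (-s) := by
        have h5 : 2 ^ s * M ≤ K := le_max_left _ _
        have h6 : (2:ℝ) ^ (-s) * 2 ^ s = 1 := by
          rw [← Real.rpow_add (by norm_num)]; simp
        have h7 : (0:ℝ) < (2:ℝ) ^ (-s) := Real.rpow_pos_of_pos (by norm_num) _
        have e := mul_le_mul_of_nonneg_left (mul_le_mul_of_nonneg_right h5 (sq_nonneg ε)) h7.le
        calc M * ε ^ 2 = (2 ^ (-s) * 2 ^ s) * (M * ε ^ 2) := by rw [h6, one_mul]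
          _ = 2 ^ (-s) * (2 ^ s * M * ε ^ 2) := by ring
          _ ≤ 2 ^ (-s) * (K * ε ^ 2) := e
          _ = K * ε ^ 2 * 2 ^ (-s) := by ring
      rw [h2]
      exact sub_nonpos.mpr (h3.trans h4)
    have hkey : ∀ t, 1 / E ≤ t → 0 ≤ g t - φ t → g' t - φ' t < 0 := by
      intro t htE hge
      have ht0 : (0:ℝ) ≤ t := le_trans hTnn htE
      have hA0 : (0:ℝ) < 1 + E * t := by nlinarith
      have hφt : 0 ≤ φ t := hφnn t ht0
      have hgt : φ t ≤ g t := by linarith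
      -- ε * (φ t)^p = K^p * ε^2 * E * (1+Et)^{-s-1}
      have hφp : ε * (φ t) ^ p = K ^ p * (ε ^ 2 * E) * (1 + E * t) ^ (-s - 1) := by
        have e1 : (φ t) ^ p = K ^ p * (ε ^ 2) ^ p * ((1 + E * t) ^ (-s)) ^ p := by
          simp only [hφ]
          rw [Real.mul_rpow (by positivity) (Real.rpow_nonneg hA0.le _),
            Real.mul_rpow hK0.le (by positivity)]
        have e2 : ((1 + E * t) ^ (-s)) ^ p = (1 + E * t) ^ (-s - 1) := by
          rw [← Real.rpow_mul hA0.le]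
          congr 1
          rw [hp, mul_add, mul_one_div, neg_div, div_self hs.ne']
          ring
        rw [e1, e2]
        calc ε * (K ^ p * (ε ^ 2) ^ p * (1 + E * t) ^ (-s - 1))
            = K ^ p * (ε * (ε ^ 2) ^ p) * (1 + E * t) ^ (-s - 1) := by ring
          _ = K ^ p * (ε ^ 2 * E) * (1 + E * t) ^ (-s - 1) := by rw [hεpow]
      -- monotonicity of rpow in base
      have hmono : (φ t) ^ p ≤ (g t) ^ p :=
        Real.rpow_le_rpow hφt hgt (by positivity)
      have hineqt := hineq t ht0
      have hD0 : (0:ℝ) < (1 + E * t) ^ (-s - 1) := Real.rpow_pos_of_pos hA0 _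
      set D : ℝ := (1 + E * t) ^ (-s - 1) with hD
      -- g' t ≤ C₉ ε² (1+t)^{-b} - C₇ K^p ε² E D
      have h1 : g' t ≤ C₉ * ε ^ 2 * (1 + t) ^ (-b) - C₇ * (K ^ p * (ε ^ 2 * E) * D) := by
        have h2 : C₇ * ε * (φ t) ^ p ≤ C₇ * ε * (g t) ^ p :=
          mul_le_mul_of_nonneg_left hmono (by positivity)
        have h3 : C₇ * ε * (φ t) ^ p = C₇ * (K ^ p * (ε ^ 2 * E) * D) := by
          rw [mul_assoc, hφp]
        linarith [hineqt]
      -- φ' t = -s K ε² E D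
      have h4 : φ' t = -(s * K) * (ε ^ 2 * E) * D := by
        simp only [hφ', hD]; ring
      -- core comparison
      have h5 := hcore t htE
      have hεE : (0:ℝ) < ε ^ 2 * E * D := by positivity
      have h6 : C₉ * ε ^ 2 * (1 + t) ^ (-b) ≤ C₉ * 2 ^ (s + 1) * (ε ^ 2 * E * D) := by
        have := mul_le_mul_of_nonneg_left h5 (by positivity : (0:ℝ) ≤ C₉ * ε ^ 2)
        calc C₉ * ε ^ 2 * (1 + t) ^ (-b) ≤ C₉ * ε ^ 2 * (2 ^ (s + 1) * E * D) := this
          _ = C₉ * 2 ^ (s + 1) * (ε ^ 2 * E * D) := by ring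
      have h7 : (s * K + 2 ^ (s + 1) * C₉ + 1) * (ε ^ 2 * E * D) ≤
          C₇ * K ^ p * (ε ^ 2 * E * D) := by
        exact mul_le_mul_of_nonneg_right hKkey hεE.le
      nlinarith [h1, h4, h6, h7]
    intro t ht
    have := stmt18_cross hhd hhT hkey t ht
    linarith
  -- conclude
  rcases le_or_gt (1 / E) t with hcase | hcase
  · exact hcomp t hcase
  · -- t ≤ 1/E, so E t ≤ 1 and (1+Et)^{-s} ≥ 2^{-s}
    have hEt : E * t ≤ 1 := by
      have h := mul_le_mul_of_nonneg_left hcase.le hE0.le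
      rwa [mul_one_div_cancel hE0.ne'] at h
    have hA0 : (0:ℝ) < 1 + E * t := by nlinarith
    have h1 : (2:ℝ) ^ (-s) ≤ (1 + E * t) ^ (-s) :=
      Real.rpow_le_rpow_of_nonpos hA0 (by linarith) (by linarith)
    have h3 : g t ≤ M * ε ^ 2 := hMb t ht
    have h4 : M * ε ^ 2 ≤ K * ε ^ 2 * 2 ^ (-s) := by
      have h5 : 2 ^ s * M ≤ K := le_max_left _ _
      have h6 : (2:ℝ) ^ (-s) * 2 ^ s = 1 := by
        rw [← Real.rpow_add (by norm_num)]; simp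
      have h7 : (0:ℝ) < (2:ℝ) ^ (-s) := Real.rpow_pos_of_pos (by norm_num) _
      have e := mul_le_mul_of_nonneg_left (mul_le_mul_of_nonneg_right h5 (sq_nonneg ε)) h7.le
      calc M * ε ^ 2 = (2 ^ (-s) * 2 ^ s) * (M * ε ^ 2) := by rw [h6, one_mul]
        _ = 2 ^ (-s) * (2 ^ s * M * ε ^ 2) := by ring
        _ ≤ 2 ^ (-s) * (K * ε ^ 2) := e
        _ = K * ε ^ 2 * 2 ^ (-s) := by ring
    have h8 : K * ε ^ 2 * 2 ^ (-s) ≤ K * ε ^ 2 * (1 + E * t) ^ (-s) :=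
      mul_le_mul_of_nonneg_left h1 (by positivity)
    calc g t ≤ M * ε ^ 2 := h3
      _ ≤ K * ε ^ 2 * 2 ^ (-s) := h4
      _ ≤ K * ε ^ 2 * (1 + E * t) ^ (-s) := h8
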